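/- Every closed sublattice of codimension n in C(Ω) contains a closed ideal of C(Ω) of codimension at most 2n. -/

import Mathlib

open Module

/-- Evaluation at a point as a linear functional on `C(Ω, ℝ)`. -/
def stmt5EvalL {Ω : Type*} [TopologicalSpace Ω] (x : Ω) : C(Ω, ℝ) →ₗ[ℝ] ℝ where
  toFun f := f x
  map_add' f g := rfl
  map_smul' c f := rfl

@[simp] lemma stmt5EvalL_apply {Ω : Type*} [TopologicalSpace Ω] (x : Ω) (f : C(Ω, ℝ)) :
    stmt5EvalL x f = f x := rfl

/-- Lattice Stone–Weierstrass: a function which agrees with members of a closed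
sublattice at every pair of points lies in the sublattice. -/
theorem stmt5_mem_of_pairs {Ω : Type*} [TopologicalSpace Ω]
    (Y : Submodule ℝ C(Ω, ℝ)) (hlat : ∀ f ∈ Y, ∀ g ∈ Y, f ⊔ g ∈ Y)
    (hclosed : IsClosed (Y : Set C(Ω, ℝ))) (f : C(Ω, ℝ))
    (h2 : ∀ x y : Ω, ∃ g ∈ Y, g x = f x ∧ g y = f y) : f ∈ Y := by
  classical
  have hinf : ∀ g ∈ (Y : Set C(Ω, ℝ)), ∀ h ∈ (Y : Set C(Ω, ℝ)), g ⊓ h ∈ (Y : Set C(Ω, ℝ)) := by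
    intro g hg h hh
    have he : g ⊓ h = -((-g) ⊔ (-h)) := by
      ext z
      simp [max_neg_neg]
    simpa [he] using Y.neg_mem (hlat _ (Y.neg_mem hg) _ (Y.neg_mem hh))
  have hsup : ∀ g ∈ (Y : Set C(Ω, ℝ)), ∀ h ∈ (Y : Set C(Ω, ℝ)), g ⊔ h ∈ (Y : Set C(Ω, ℝ)) := hlat
  rw [← SetLike.mem_coe, ← hclosed.closure_eq]
  rw [mem_closure_iff_nhds_basis
    (nhds_basis_uniformity' ContinuousMap.hasBasis_compactConvergenceUniformity)]
  rintro ⟨K, V⟩ ⟨hK, hV⟩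
  obtain ⟨ε, hε, hεV⟩ := Metric.mem_uniformity_dist.mp hV
  suffices h : ∃ g ∈ Y, ∀ z ∈ K, dist (f z) (g z) < ε by
    obtain ⟨g, hg, hgd⟩ := h
    exact ⟨g, hg, fun z hz => hεV (hgd z hz)⟩
  choose g hgY hgx hgy using h2
  rcases K.eq_empty_or_nonempty with hKe | ⟨x₀, hx₀⟩
  · exact ⟨0, Y.zero_mem, by simp [hKe]⟩
  have step1 : ∀ x : Ω, ∃ h ∈ Y, h x = f x ∧ ∀ z ∈ K, h z < f z + ε := by
    intro x
    have hUopen : ∀ y : Ω, IsOpen {z | g x y z < f z + ε} := fun y =>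
      isOpen_lt (g x y).continuous (f.continuous.add continuous_const)
    have hcov : K ⊆ ⋃ y : Ω, {z | g x y z < f z + ε} := fun z hz =>
      Set.mem_iUnion.2 ⟨z, by simp [hgy x z, hε]⟩
    obtain ⟨t, ht⟩ := hK.elim_finite_subcover _ hUopen hcov
    have hne : (insert x₀ t).Nonempty := Finset.insert_nonempty _ _
    refine ⟨(insert x₀ t).inf' hne fun y => g x y,
      Finset.inf'_mem (Y : Set C(Ω, ℝ)) hinf _ hne _ (fun y _ => hgY x y), ?_, ?_⟩
    · rw [ContinuousMap.inf'_apply]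
      apply le_antisymm
      · exact (Finset.inf'_le _ (Finset.mem_insert_self _ _)).trans_eq (hgx x x₀)
      · exact Finset.le_inf' _ _ fun y _ => (hgx x y).ge
    · intro z hz
      obtain ⟨y, hyt, hyz⟩ := Set.mem_iUnion₂.mp (ht hz)
      rw [ContinuousMap.inf'_apply]
      exact lt_of_le_of_lt (Finset.inf'_le _ (Finset.mem_insert_of_mem hyt)) hyz
  choose h hhY hhx hhK using step1
  have hWopen : ∀ x : Ω, IsOpen {z | f z - ε < h x z} := fun x =>
    isOpen_lt (f.continuous.sub continuous_const) (h x).continuous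
  have hcov : K ⊆ ⋃ x : Ω, {z | f z - ε < h x z} := fun z hz =>
    Set.mem_iUnion.2 ⟨z, by simp [hhx z, hε]⟩
  obtain ⟨s, hs⟩ := hK.elim_finite_subcover _ hWopen hcov
  have hne : (insert x₀ s).Nonempty := Finset.insert_nonempty _ _
  refine ⟨(insert x₀ s).sup' hne h,
    Finset.sup'_mem (Y : Set C(Ω, ℝ)) hsup _ hne _ (fun x _ => hhY x), ?_⟩
  intro z hz
  have h1 : ((insert x₀ s).sup' hne h) z < f z + ε := by
    rw [ContinuousMap.sup'_apply, Finset.sup'_lt_iff]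
    exact fun x _ => hhK x z hz
  have h2' : f z - ε < ((insert x₀ s).sup' hne h) z := by
    obtain ⟨x, hxs, hxz⟩ := Set.mem_iUnion₂.mp (hs hz)
    rw [ContinuousMap.sup'_apply, Finset.lt_sup'_iff]
    exact ⟨x, Finset.mem_insert_of_mem hxs, hxz⟩
  rw [Real.dist_eq, abs_lt]
  constructor <;> linarith

/-- Membership in a closed sublattice follows from vanishing of all two-point functionals
that vanish on it. -/
theorem stmt5_mem_of_functionals {Ω : Type*} [TopologicalSpace Ω]
    (Y : Submodule ℝ C(Ω, ℝ)) (hlat : ∀ f ∈ Y, ∀ g ∈ Y, f ⊔ g ∈ Y)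
    (hclosed : IsClosed (Y : Set C(Ω, ℝ))) (f : C(Ω, ℝ))
    (hf : ∀ (x y : Ω) (a b : ℝ), (∀ g ∈ Y, a * g x + b * g y = 0) → a * f x + b * f y = 0) :
    f ∈ Y := by
  apply stmt5_mem_of_pairs Y hlat hclosed f
  intro x y
  set L : C(Ω, ℝ) →ₗ[ℝ] ℝ × ℝ := (stmt5EvalL x).prod (stmt5EvalL y) with hLdef
  set V : Submodule ℝ (ℝ × ℝ) := Y.map L with hVdef
  have hLapp : ∀ g : C(Ω, ℝ), L g = (g x, g y) := fun g => rfl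
  have himg : (f x, f y) ∈ V → ∃ g ∈ Y, g x = f x ∧ g y = f y := by
    rintro ⟨g, hg, hgeq⟩
    rw [hLapp] at hgeq
    exact ⟨g, hg, congrArg Prod.fst hgeq, congrArg Prod.snd hgeq⟩
  by_cases htop : V = ⊤
  · exact himg (htop ▸ Submodule.mem_top)
  by_cases hbot : V = ⊥
  · have hzero : ∀ g ∈ Y, g x = 0 ∧ g y = 0 := by
      intro g hg
      have hm : L g ∈ V := Submodule.mem_map_of_mem hg
      rw [hbot, Submodule.mem_bot] at hm
      rw [hLapp] at hm
      exact ⟨congrArg Prod.fst hm, congrArg Prod.snd hm⟩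
    have h1 : f x = 0 := by
      have := hf x x 1 0 (fun g hg => by simp [(hzero g hg).1])
      linarith
    have h2 : f y = 0 := by
      have := hf y y 1 0 (fun g hg => by simp [(hzero g hg).2])
      linarith
    exact ⟨0, Y.zero_mem, by simp [h1], by simp [h2]⟩
  obtain ⟨v, hvV, hv0⟩ := Submodule.exists_mem_ne_zero_of_ne_bot hbot
  have hspan : V = Submodule.span ℝ {v} := by
    refine le_antisymm ?_ (Submodule.span_le.2 (by simpa using hvV))
    intro w hw
    by_contra hws
    apply htop
    rw [eq_top_iff]
    have hd : v.1 * w.2 - v.2 * w.1 ≠ 0 := by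
      intro hd0
      apply hws
      rcases eq_or_ne v.1 0 with h1 | h1
      · have h2 : v.2 ≠ 0 := fun h2 => hv0 (Prod.ext h1 h2)
        have hw1 : w.1 = 0 := by
          have : v.2 * w.1 = 0 := by rw [h1] at hd0; simpa using hd0
          rcases mul_eq_zero.mp this with h | h
          · exact absurd h h2
          · exact h
        exact Submodule.mem_span_singleton.2 ⟨w.2 / v.2, Prod.ext (by simp [h1, hw1]) (by
          simp [Prod.smul_snd]; field_simp)⟩
      · refine Submodule.mem_span_singleton.2 ⟨w.1 / v.1, Prod.ext (by simp only [Prod.smul_fst, smul_eq_mul]; field_simp) ?_⟩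
        have : w.2 = v.2 * w.1 / v.1 := by field_simp; linarith
        rw [this]; simp [Prod.smul_snd]; field_simp
    rintro ⟨s, t⟩ -
    have hc : ((s * w.2 - t * w.1) / (v.1 * w.2 - v.2 * w.1)) • v +
        ((t * v.1 - s * v.2) / (v.1 * w.2 - v.2 * w.1)) • w = (s, t) := by
      rw [Prod.ext_iff]
      constructor
      · simp only [Prod.fst_add, Prod.smul_fst, smul_eq_mul]
        rw [div_mul_eq_mul_div, div_mul_eq_mul_div, ← add_div, div_eq_iff hd]
        ring
      · simp only [Prod.snd_add, Prod.smul_snd, smul_eq_mul]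
        rw [div_mul_eq_mul_div, div_mul_eq_mul_div, ← add_div, div_eq_iff hd]
        ring
    rw [← hc]
    exact V.add_mem (V.smul_mem _ hvV) (V.smul_mem _ hw)
  have hrel : ∀ g ∈ Y, v.2 * g x + (-v.1) * g y = 0 := by
    intro g hg
    have hm : (g x, g y) ∈ V := by rw [← hLapp]; exact Submodule.mem_map_of_mem hg
    rw [hspan] at hm
    obtain ⟨c, hc⟩ := Submodule.mem_span_singleton.1 hm
    have hc1 : c * v.1 = g x := congrArg Prod.fst hc
    have hc2 : c * v.2 = g y := congrArg Prod.snd hc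
    rw [← hc1, ← hc2]; ring
  have hfrel := hf x y v.2 (-v.1) hrel
  apply himg
  rw [hspan]
  rcases eq_or_ne v.1 0 with h1 | h1
  · have h2 : v.2 ≠ 0 := fun h2 => hv0 (Prod.ext h1 h2)
    have hfx : f x = 0 := by
      have : v.2 * f x = 0 := by rw [h1] at hfrel; simpa using hfrel
      rcases mul_eq_zero.mp this with h | h
      · exact absurd h h2
      · exact h
    exact Submodule.mem_span_singleton.2 ⟨f y / v.2, Prod.ext (by simp [h1, hfx]) (by
      simp [Prod.smul_snd]; field_simp)⟩
  · refine Submodule.mem_span_singleton.2 ⟨f x / v.1, Prod.ext (by simp only [Prod.smul_fst, smul_eq_mul]; field_simp) ?_⟩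
    have : f y = v.2 * f x / v.1 := by field_simp; linarith
    rw [this]; simp [Prod.smul_snd]; field_simp

/-- Every closed sublattice of `C(Ω)` of codimension `n` contains a closed order ideal of
codimension at most `2n`. -/
theorem stmt5 {Ω : Type*} [TopologicalSpace Ω] [T2Space Ω] [CompletelyRegularSpace Ω]
    (Y : Submodule ℝ C(Ω, ℝ)) (hlat : ∀ f ∈ Y, ∀ g ∈ Y, f ⊔ g ∈ Y)
    (hclosed : IsClosed (Y : Set C(Ω, ℝ)))
    (n : ℕ) (hfin : FiniteDimensional ℝ (C(Ω, ℝ) ⧸ Y))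
    (hn : Module.finrank ℝ (C(Ω, ℝ) ⧸ Y) = n) :
    ∃ J : Submodule ℝ C(Ω, ℝ), J ≤ Y ∧
      (∀ f g : C(Ω, ℝ), |f| ≤ |g| → g ∈ J → f ∈ J) ∧
      IsClosed (J : Set C(Ω, ℝ)) ∧
      FiniteDimensional ℝ (C(Ω, ℝ) ⧸ J) ∧
      Module.finrank ℝ (C(Ω, ℝ) ⧸ J) ≤ 2 * n := by
  classical
  set P : Set (Module.Dual ℝ C(Ω, ℝ)) :=
    {φ | (∀ g ∈ Y, φ g = 0) ∧ ∃ (x y : Ω) (a b : ℝ),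
      φ = a • stmt5EvalL x + b • stmt5EvalL y} with hPdef
  obtain ⟨B, hBP, hBspan, hBli⟩ := exists_linearIndependent ℝ P
  have hker : ∀ φ ∈ B, Y ≤ LinearMap.ker φ := fun φ hφ g hg =>
    LinearMap.mem_ker.2 ((hBP hφ).1 g hg)
  let ψ : B → Module.Dual ℝ (C(Ω, ℝ) ⧸ Y) := fun φ => Y.liftQ φ.1 (hker φ.1 φ.2)
  have hψli : LinearIndependent ℝ ψ := by
    apply LinearIndependent.of_comp (Y.mkQ.dualMap)
    have : (Y.mkQ.dualMap ∘ ψ) = fun φ : B => (φ : Module.Dual ℝ C(Ω, ℝ)) := by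
      funext φ
      exact LinearMap.ext fun g => rfl
    rw [this]
    exact hBli
  have hBfin : B.Finite := by
    have h1 := hψli.lt_aleph0_of_finite
    rw [Cardinal.lt_aleph0_iff_finite] at h1
    exact Set.toFinite B
  haveI := hBfin.fintype
  have hcard : Fintype.card B ≤ n := by
    have h1 := hψli.fintype_card_le_finrank
    rwa [Subspace.dual_finrank_eq, hn] at h1
  have hpair : ∀ φ : B, ∃ (x y : Ω) (a b : ℝ),
      (φ : Module.Dual ℝ C(Ω, ℝ)) = a • stmt5EvalL x + b • stmt5EvalL y :=
    fun φ => (hBP φ.2).2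
  choose px py pa pb hpφ using hpair
  set S : Finset Ω := Finset.univ.image px ∪ Finset.univ.image py with hSdef
  have hScard : S.card ≤ 2 * n := by
    calc S.card ≤ (Finset.univ.image px).card + (Finset.univ.image py).card :=
          Finset.card_union_le _ _
      _ ≤ Fintype.card B + Fintype.card B := by
          gcongr <;> exact Finset.card_image_le.trans_eq Finset.card_univ
      _ = 2 * Fintype.card B := (two_mul _).symm
      _ ≤ 2 * n := by omega
  set J : Submodule ℝ C(Ω, ℝ) := ⨅ p ∈ S, LinearMap.ker (stmt5EvalL p) with hJdef
  have hmemJ : ∀ f : C(Ω, ℝ), f ∈ J ↔ ∀ p ∈ S, f p = 0 := by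
    intro f
    simp [hJdef, Submodule.mem_iInf]
  refine ⟨J, ?_, ?_, ?_, ?_⟩
  · -- J ≤ Y
    intro f hf
    apply stmt5_mem_of_functionals Y hlat hclosed f
    intro x y a b hrel
    set φ : Module.Dual ℝ C(Ω, ℝ) := a • stmt5EvalL x + b • stmt5EvalL y with hφdef
    have hφapp : ∀ h : C(Ω, ℝ), φ h = a * h x + b * h y := fun h => by
      simp [hφdef]
    have hφP : φ ∈ P := ⟨fun g hg => by rw [hφapp]; exact hrel g hg, x, y, a, b, rfl⟩
    have hφspan : φ ∈ Submodule.span ℝ B := by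
      rw [hBspan]
      exact Submodule.subset_span hφP
    have hBf : ∀ χ ∈ B, χ f = 0 := by
      intro χ hχ
      have hx : f (px ⟨χ, hχ⟩) = 0 := (hmemJ f).1 hf _ (by simp [hSdef])
      have hy : f (py ⟨χ, hχ⟩) = 0 := (hmemJ f).1 hf _ (by simp [hSdef])
      have := hpφ ⟨χ, hχ⟩
      rw [show χ = (⟨χ, hχ⟩ : B).1 from rfl, this]
      simp [hx, hy]
    have hφf : φ f = 0 := by
      have hsub : Submodule.span ℝ B ≤ LinearMap.ker (Module.Dual.eval ℝ C(Ω, ℝ) f) :=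
        Submodule.span_le.2 fun χ hχ => LinearMap.mem_ker.2 (hBf χ hχ)
      exact hsub hφspan
    rw [← hφapp f]
    exact hφf
  · -- ideal
    intro f g habs hg
    rw [hmemJ] at hg ⊢
    intro p hp
    have h1 : |f| p ≤ |g| p := habs p
    rw [ContinuousMap.abs_apply, ContinuousMap.abs_apply, hg p hp] at h1
    simpa using abs_nonpos_iff.1 (by simpa using h1)
  · -- closed
    have hJset : (J : Set C(Ω, ℝ)) = ⋂ p ∈ S, {f : C(Ω, ℝ) | f p = 0} := by
      ext f
      simp [hmemJ f]
    rw [hJset]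
    exact isClosed_biInter fun p _ =>
      isClosed_eq (continuous_eval_const p) continuous_const
  · -- finite codimension
    set Φ : C(Ω, ℝ) →ₗ[ℝ] (S → ℝ) := LinearMap.pi (fun p : S => stmt5EvalL (p : Ω)) with hΦdef
    have hkerΦ : LinearMap.ker Φ = J := by
      ext f
      simp [hΦdef, LinearMap.mem_ker, hmemJ f, funext_iff, LinearMap.pi_apply, Subtype.forall]
    let e : (C(Ω, ℝ) ⧸ J) ≃ₗ[ℝ] LinearMap.range Φ :=
      (Submodule.quotEquivOfEq J (LinearMap.ker Φ) hkerΦ.symm).trans Φ.quotKerEquivRange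
    haveI hfd : FiniteDimensional ℝ (C(Ω, ℝ) ⧸ J) :=
      Module.Finite.equiv e.symm
    refine ⟨hfd, ?_⟩
    rw [e.finrank_eq]
    calc finrank ℝ (LinearMap.range Φ) ≤ finrank ℝ (S → ℝ) := (LinearMap.range Φ).finrank_le
      _ = S.card := by rw [Module.finrank_fintype_fun_eq_card, Fintype.card_coe]
      _ ≤ 2 * n := hScard
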